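/- Fix U ∈ ℝ with U ≠ 0 and k > 0 with k³ + k² − U² > 0. Set Q = √(k(k³ + k² − U²)) (the real square root), ω_± = (U ± Q)/(1 + 1/k), and c̃_± = ±(ω_∓² − k⁴)/(ω_−² − ω_+²). Then for every t ∈ ℝ, |c̃_−·exp(−i ω_− t) + c̃_+·exp(−i ω_+ t)|² = |cos(kQt/(1+k)) − (i/(2k))·(Q/U + k²U/Q)·sin(kQt/(1+k))|². -/

import Mathlib

/-- With `Q = √(k(k³+k²−U²))`, `ω± = (U±Q)/(1+1/k)` and
`c̃± = ±(ω∓²−k⁴)/(ω₋²−ω₊²)`, for every `t`,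
`|c̃₋e^{−iω₋t} + c̃₊e^{−iω₊t}|² = |cos(kQt/(1+k)) − (i/(2k))(Q/U + k²U/Q)sin(kQt/(1+k))|²`. -/
theorem full_line_amplitude_identity (U k : ℝ) (hU : U ≠ 0) (hk : 0 < k)
    (hpos : 0 < k ^ 3 + k ^ 2 - U ^ 2)
    (Q ωp ωm cp cm : ℝ)
    (hQ : Q = Real.sqrt (k * (k ^ 3 + k ^ 2 - U ^ 2)))
    (hωp : ωp = (U + Q) / (1 + 1 / k)) (hωm : ωm = (U - Q) / (1 + 1 / k))
    (hcp : cp = (ωm ^ 2 - k ^ 4) / (ωm ^ 2 - ωp ^ 2))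
    (hcm : cm = -((ωp ^ 2 - k ^ 4) / (ωm ^ 2 - ωp ^ 2))) :
    ∀ t : ℝ,
      (‖(cm : ℂ) * Complex.exp (-Complex.I * (ωm : ℂ) * (t : ℂ))
          + (cp : ℂ) * Complex.exp (-Complex.I * (ωp : ℂ) * (t : ℂ))‖) ^ 2
      = (‖(Real.cos (k * Q * t / (1 + k)) : ℂ)
          - Complex.I / (2 * (k : ℂ)) * ((Q / U + k ^ 2 * U / Q : ℝ) : ℂ)
            * (Real.sin (k * Q * t / (1 + k)) : ℂ)‖) ^ 2 := by
  intro t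
  have hk0 : k ≠ 0 := ne_of_gt hk
  have hk1 : (1 : ℝ) + k ≠ 0 := by positivity
  have hA : (1 : ℝ) + 1 / k ≠ 0 := by positivity
  have hQpos : 0 < Q := by rw [hQ]; exact Real.sqrt_pos.mpr (by positivity)
  have hQ0 : Q ≠ 0 := ne_of_gt hQpos
  have hQsq : Q ^ 2 = k * (k ^ 3 + k ^ 2 - U ^ 2) := by
    rw [hQ, Real.sq_sqrt (by positivity)]
  have hD : ωm ^ 2 - ωp ^ 2 = -(4 * U * Q) / (1 + 1 / k) ^ 2 := by
    rw [hωp, hωm]; field_simp; ring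
  have hDne : ωm ^ 2 - ωp ^ 2 ≠ 0 := by
    rw [hD]; exact div_ne_zero (by simp [hU, hQ0]) (pow_ne_zero _ hA)
  have hsum : ωm ^ 2 + ωp ^ 2 = 2 * (U ^ 2 + Q ^ 2) / (1 + 1 / k) ^ 2 := by
    rw [hωp, hωm]; field_simp; ring
  have h1 : cm + cp = 1 := by
    rw [hcm, hcp]; field_simp; ring
  have hstep : cm - cp = -((ωm ^ 2 + ωp ^ 2 - 2 * k ^ 4) / (ωm ^ 2 - ωp ^ 2)) := by
    rw [hcm, hcp]; field_simp; ring
  have h2 : cm - cp = -((Q / U + k ^ 2 * U / Q) / (2 * k)) := by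
    rw [hstep, hsum, hD]
    field_simp
    linear_combination (4 * (1 + k)) * hQsq
  set θ : ℝ := k * Q * t / (1 + k) with hθ
  set φ : ℝ := k * U * t / (1 + k) with hφ
  have hmt : ωm * t = φ - θ := by rw [hωm, hφ, hθ]; field_simp; ring
  have hpt : ωp * t = φ + θ := by rw [hωp, hφ, hθ]; field_simp; ring
  have em : -Complex.I * (ωm : ℂ) * (t : ℂ)
      = ((-φ : ℝ) : ℂ) * Complex.I + ((θ : ℝ) : ℂ) * Complex.I := by
    have h : ((ωm * t : ℝ) : ℂ) = ((φ - θ : ℝ) : ℂ) := by rw [hmt]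
    push_cast at h ⊢
    linear_combination (-Complex.I) * h
  have ep : -Complex.I * (ωp : ℂ) * (t : ℂ)
      = ((-φ : ℝ) : ℂ) * Complex.I + ((-θ : ℝ) : ℂ) * Complex.I := by
    have h : ((ωp * t : ℝ) : ℂ) = ((φ + θ : ℝ) : ℂ) := by rw [hpt]
    push_cast at h ⊢
    linear_combination (-Complex.I) * h
  have h1c : (cm : ℂ) + (cp : ℂ) = 1 := by exact_mod_cast h1
  have h2c : (cm : ℂ) - (cp : ℂ)
      = -(((Q / U + k ^ 2 * U / Q : ℝ) : ℂ) / (2 * (k : ℂ))) := by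
    have := congrArg (Complex.ofReal) h2
    push_cast at this ⊢
    exact this
  have e1 : Complex.exp (((θ : ℝ) : ℂ) * Complex.I)
      = (Real.cos θ : ℂ) + (Real.sin θ : ℂ) * Complex.I := by
    rw [Complex.exp_mul_I, ← Complex.ofReal_cos, ← Complex.ofReal_sin]
  have e2 : Complex.exp (((-θ : ℝ) : ℂ) * Complex.I)
      = (Real.cos θ : ℂ) - (Real.sin θ : ℂ) * Complex.I := by
    rw [Complex.exp_mul_I, Complex.ofReal_neg, Complex.cos_neg, Complex.sin_neg,
      ← Complex.ofReal_cos, ← Complex.ofReal_sin]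
    ring
  have key : (cm : ℂ) * Complex.exp (-Complex.I * (ωm : ℂ) * (t : ℂ))
      + (cp : ℂ) * Complex.exp (-Complex.I * (ωp : ℂ) * (t : ℂ))
      = Complex.exp (((-φ : ℝ) : ℂ) * Complex.I)
        * ((Real.cos θ : ℂ)
          - Complex.I / (2 * (k : ℂ)) * ((Q / U + k ^ 2 * U / Q : ℝ) : ℂ)
            * (Real.sin θ : ℂ)) := by
    rw [em, ep, Complex.exp_add, Complex.exp_add, e1, e2]
    set E := Complex.exp (((-φ : ℝ) : ℂ) * Complex.I)
    linear_combination (E * (Real.cos θ : ℂ)) * h1c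
      + (E * Complex.I * (Real.sin θ : ℂ)) * h2c
  rw [key, norm_mul, Complex.norm_exp_ofReal_mul_I, one_mul]
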